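/- Let G' be the Type A Whitney flip of a simple graph G along (H, v1, v2). Then G' is bipartite if and only if G is bipartite. -/

import Mathlib

open SimpleGraph

/-- The Type A Whitney flip of `G` along `(H, v1, v2)`: edges with both endpoints in `H`
are mapped by the swap of `v1` and `v2`; all other edges are kept. -/
def typeAFlip {V : Type*} [DecidableEq V] (G : SimpleGraph V) (v1 v2 : V) (H : Set V) :
    SimpleGraph V where
  Adj a b :=
    (Equiv.swap v1 v2 a ∈ H ∧ Equiv.swap v1 v2 b ∈ H ∧
      G.Adj (Equiv.swap v1 v2 a) (Equiv.swap v1 v2 b)) ∨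
    (¬(a ∈ H ∧ b ∈ H) ∧ G.Adj a b)
  symm := by
    constructor
    rintro a b (⟨ha, hb, h⟩ | ⟨hn, h⟩)
    · exact Or.inl ⟨hb, ha, h.symm⟩
    · exact Or.inr ⟨fun ⟨hb', ha'⟩ => hn ⟨ha', hb'⟩, h.symm⟩
  loopless := by
    constructor
    rintro a (⟨_, _, h⟩ | ⟨_, h⟩) <;> exact G.irrefl h

lemma swap_mem_iff_aux {V : Type*} [DecidableEq V] {v1 v2 : V} {H : Set V}
    (h1 : v1 ∈ H) (h2 : v2 ∈ H) (x : V) : Equiv.swap v1 v2 x ∈ H ↔ x ∈ H := by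
  have key : ∀ y : V, y ∈ H → Equiv.swap v1 v2 y ∈ H := by
    intro y hy
    rcases eq_or_ne y v1 with rfl | hy1
    · simpa using h2
    rcases eq_or_ne y v2 with rfl | hy2
    · simpa using h1
    · rwa [Equiv.swap_apply_of_ne_of_ne hy1 hy2]
  refine ⟨fun h => ?_, key x⟩
  have := key _ h
  rwa [Equiv.swap_apply_self] at this

lemma typeAFlip_colorable_aux {V : Type*} [DecidableEq V] (G : SimpleGraph V)
    (v1 v2 : V) (hadj : G.Adj v1 v2)
    (H : Set V) (h1 : v1 ∈ H) (h2 : v2 ∈ H)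
    (hHedge : ∀ x y : V, G.Adj x y → x ∈ H \ ({v1, v2} : Set V) → y ∈ H) :
    G.Colorable 2 → (typeAFlip G v1 v2 H).Colorable 2 := by
  classical
  rintro ⟨c⟩
  have hmem := swap_mem_iff_aux h1 h2 (v1 := v1) (v2 := v2)
  have fin1 : ∀ x y : Fin 2, x ≠ y → 1 - x ≠ 1 - y := by decide
  have fin2 : ∀ x y : Fin 2, x ≠ y → 1 - x = y := by decide
  refine ⟨Coloring.mk
    (fun x => if x ∈ H then 1 - c (Equiv.swap v1 v2 x) else c x) ?_⟩
  intro a b hab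
  rcases hab with ⟨ha, hb, h⟩ | ⟨hn, h⟩
  · have ha' : a ∈ H := (hmem a).mp ha
    have hb' : b ∈ H := (hmem b).mp hb
    simp only [if_pos ha', if_pos hb']
    exact fin1 _ _ (c.valid h)
  · have hab' := c.valid h
    by_cases haH : a ∈ H <;> by_cases hbH : b ∈ H
    · exact absurd ⟨haH, hbH⟩ hn
    · have haV : a = v1 ∨ a = v2 := by
        by_contra hc
        push_neg at hc
        exact hbH (hHedge a b h ⟨haH, by simp [hc.1, hc.2]⟩)
      have hσ : c (Equiv.swap v1 v2 a) ≠ c a := by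
        rcases haV with rfl | rfl
        · rw [Equiv.swap_apply_left]; exact c.valid hadj.symm
        · rw [Equiv.swap_apply_right]; exact c.valid hadj
      simp only [if_pos haH, if_neg hbH]
      rw [fin2 _ _ hσ]
      exact hab'
    · have hbV : b = v1 ∨ b = v2 := by
        by_contra hc
        push_neg at hc
        exact haH (hHedge b a h.symm ⟨hbH, by simp [hc.1, hc.2]⟩)
      have hσ : c (Equiv.swap v1 v2 b) ≠ c b := by
        rcases hbV with rfl | rfl
        · rw [Equiv.swap_apply_left]; exact c.valid hadj.symm
        · rw [Equiv.swap_apply_right]; exact c.valid hadj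
      simp only [if_neg haH, if_pos hbH]
      rw [fin2 _ _ hσ]
      exact hab'
    · simp only [if_neg haH, if_neg hbH]
      exact hab'

lemma typeAFlip_typeAFlip {V : Type*} [DecidableEq V] (G : SimpleGraph V)
    (v1 v2 : V) (H : Set V) (h1 : v1 ∈ H) (h2 : v2 ∈ H) :
    typeAFlip (typeAFlip G v1 v2 H) v1 v2 H = G := by
  have hmem := swap_mem_iff_aux h1 h2 (v1 := v1) (v2 := v2)
  ext a b
  constructor
  · rintro (⟨ha, hb, (⟨ha2, hb2, h2⟩ | ⟨hn2, h2⟩)⟩ | ⟨hn, (⟨ha2, hb2, h2⟩ | ⟨hn2, h2⟩)⟩)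
    · rwa [Equiv.swap_apply_self, Equiv.swap_apply_self] at h2
    · exact absurd ⟨ha, hb⟩ hn2
    · exact absurd ⟨(hmem a).mp ha2, (hmem b).mp hb2⟩ hn
    · exact h2
  · intro h
    by_cases hb : a ∈ H ∧ b ∈ H
    · exact Or.inl ⟨(hmem a).mpr hb.1, (hmem b).mpr hb.2,
        Or.inl ⟨by rw [Equiv.swap_apply_self]; exact hb.1,
          by rw [Equiv.swap_apply_self]; exact hb.2,
          by rwa [Equiv.swap_apply_self, Equiv.swap_apply_self]⟩⟩
    · exact Or.inr ⟨hb, Or.inr ⟨hb, h⟩⟩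

/-- the Type A Whitney flip of a simple graph is bipartite (2-colorable) if
and only if the original graph is bipartite. -/
theorem typeAFlip_bipartite_iff {V : Type*} [DecidableEq V] (G : SimpleGraph V)
    (v1 v2 : V) (hne : v1 ≠ v2) (hadj : G.Adj v1 v2)
    (H : Set V) (h1 : v1 ∈ H) (h2 : v2 ∈ H) (hHconn : (G.induce H).Connected)
    (hHedge : ∀ x y : V, G.Adj x y → x ∈ H \ ({v1, v2} : Set V) → y ∈ H) :
    (typeAFlip G v1 v2 H).Colorable 2 ↔ G.Colorable 2 := by
  have hmem := swap_mem_iff_aux h1 h2 (v1 := v1) (v2 := v2)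
  have hadj' : (typeAFlip G v1 v2 H).Adj v1 v2 :=
    Or.inl ⟨by simpa [Equiv.swap_apply_left] using h2,
      by simpa [Equiv.swap_apply_right] using h1,
      by rw [Equiv.swap_apply_left, Equiv.swap_apply_right]; exact hadj.symm⟩
  have hHedge' : ∀ x y : V, (typeAFlip G v1 v2 H).Adj x y →
      x ∈ H \ ({v1, v2} : Set V) → y ∈ H := by
    rintro x y (⟨hx, hy, h⟩ | ⟨hn, h⟩) hxH
    · exact (hmem y).mp hy
    · exact hHedge x y h hxH
  constructor
  · intro hc
    have := typeAFlip_colorable_aux (typeAFlip G v1 v2 H) v1 v2 hadj' H h1 h2 hHedge' hc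
    rwa [typeAFlip_typeAFlip G v1 v2 H h1 h2] at this
  · exact typeAFlip_colorable_aux G v1 v2 hadj H h1 h2 hHedge
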